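/- Let J, G be histograms with spt(G) ⊆ spt(J) and G N-rational (all coordinates of N·G are integers). Then the multinomial probability μ_{N,J}(N·G) = N!·Π_{j∈spt(G)} J(j)^{N·G(j)}/(N·G(j))! satisfies |(1/N)·log μ_{N,J}(N·G) + KL(G,J)| ≤ 2·(g+1)·log(N)/N. -/

import Mathlib

open Real Finset Nat

def IsHistogram {g : ℕ} (H : Fin g → ℝ) : Prop :=
  (∀ j, 0 ≤ H j) ∧ ∑ j, H j = 1

noncomputable def spt {g : ℕ} (H : Fin g → ℝ) : Finset (Fin g) :=
  Finset.univ.filter (fun j => 0 < H j)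

noncomputable def KL {g : ℕ} (G J : Fin g → ℝ) : ℝ :=
  ∑ j ∈ spt G, G j * Real.log (G j / J j)

noncomputable def Dst (k : ℕ) : ℝ := Real.log (k !) - ((k : ℝ) * Real.log k - k)

lemma log_factorial_succ (k : ℕ) :
    Real.log ((k+1)! : ℝ) = Real.log (k+1 : ℕ) + Real.log (k ! : ℝ) := by
  rw [Nat.factorial_succ, Nat.cast_mul, Real.log_mul] <;>
    positivity

lemma Dst_nonneg (k : ℕ) : 0 ≤ Dst k := by
  induction k with
  | zero => simp [Dst]
  | succ k ih =>
    unfold Dst at ih ⊢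
    rw [log_factorial_succ]
    rcases Nat.eq_zero_or_pos k with hk | hk
    · subst hk; simp
    have hk0 : (0:ℝ) < k := by exact_mod_cast hk
    have h1 : Real.log ((k+1:ℕ) : ℝ) - Real.log k ≤ 1 / k := by
      rw [← Real.log_div (by positivity) (by positivity)]
      have := Real.log_le_sub_one_of_pos (x := ((k+1:ℕ):ℝ) / k) (by positivity)
      calc Real.log (((k+1:ℕ):ℝ) / k) ≤ ((k+1:ℕ):ℝ) / k - 1 := this
        _ = 1 / k := by push_cast; field_simp; ring
    have h2 : (k:ℝ) * (Real.log ((k+1:ℕ):ℝ) - Real.log k) ≤ 1 := by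
      calc (k:ℝ) * (Real.log ((k+1:ℕ):ℝ) - Real.log k) ≤ (k:ℝ) * (1/k) :=
        mul_le_mul_of_nonneg_left h1 (le_of_lt hk0)
        _ = 1 := by field_simp
    push_cast at h2 ⊢
    nlinarith [ih]

lemma Dst_le (k : ℕ) (hk : 1 ≤ k) : Dst k ≤ Real.log k + 1 := by
  induction k, hk using Nat.le_induction with
  | base => simp [Dst]
  | succ k hk ih =>
    unfold Dst at ih ⊢
    rw [log_factorial_succ]
    have hk0 : (0:ℝ) < k := by exact_mod_cast hk
    have h1 : 1 / ((k:ℝ)+1) ≤ Real.log ((k:ℝ)+1) - Real.log k := by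
      have h2 := Real.log_le_sub_one_of_pos (x := (k:ℝ) / (k+1)) (by positivity)
      rw [Real.log_div (by positivity) (by positivity)] at h2
      have : (k:ℝ)/(k+1) - 1 = -(1/((k:ℝ)+1)) := by field_simp; ring
      linarith [h2.trans_eq this]
    have h3 : 1 ≤ ((k:ℝ)+1) * (Real.log ((k:ℝ)+1) - Real.log k) := by
      have := mul_le_mul_of_nonneg_left h1 (by positivity : (0:ℝ) ≤ (k:ℝ)+1)
      calc (1:ℝ) = ((k:ℝ)+1) * (1/((k:ℝ)+1)) := by field_simp
        _ ≤ _ := this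
    have h4 : Real.log k ≤ Real.log ((k:ℝ)+1) :=
      Real.log_le_log (by positivity) (by linarith)
    push_cast
    nlinarith

lemma Dst_le_two_log (N k : ℕ) (hN : 2 ≤ N) (hk1 : 1 ≤ k) (hkN : k ≤ N) :
    Dst k ≤ 2 * Real.log N := by
  have hlog2 : Real.log 2 ≤ Real.log N :=
    Real.log_le_log (by norm_num) (by exact_mod_cast hN)
  have hl2 : (0.6931471803 : ℝ) < Real.log 2 := Real.log_two_gt_d9
  rcases Nat.lt_or_ge N 3 with h3 | h3
  · -- N = 2, k ∈ {1,2}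
    interval_cases N
    interval_cases k
    · have : Dst 1 = 1 := by simp [Dst]
      rw [this]; push_cast; linarith
    · have : Dst 2 = 2 - Real.log 2 := by
        simp [Dst, Nat.factorial]
        ring
      rw [this]; push_cast; linarith
  · have hN1 : (1:ℝ) < Real.log N := by
      have : Real.log 3 ≤ Real.log N := Real.log_le_log (by norm_num) (by exact_mod_cast h3)
      have he : Real.exp 1 < 3 := by
        have := Real.exp_one_lt_d9
        linarith
      have : (1:ℝ) < Real.log 3 := by
        rw [show (1:ℝ) = Real.log (Real.exp 1) by simp]
        exact Real.log_lt_log (Real.exp_pos 1) he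
      linarith [Real.log_le_log (by norm_num : (0:ℝ) < 3) (by exact_mod_cast h3 : (3:ℝ) ≤ N)]
    have hlk : Real.log k ≤ Real.log N :=
      Real.log_le_log (by exact_mod_cast hk1) (by exact_mod_cast hkN)
    have := Dst_le k hk1
    linarith

theorem multinomial_large_deviations {g : ℕ} (N : ℕ) (hN : 2 ≤ N)
    (G J : Fin g → ℝ) (hG : IsHistogram G) (hJ : IsHistogram J)
    (hsub : ∀ j, 0 < G j → 0 < J j)
    (V : Fin g → ℕ) (hV : ∑ j, V j = N) (hGV : ∀ j, G j = (V j : ℝ) / N) :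
    |(1 / (N : ℝ)) *
        Real.log ((N ! : ℝ) * ∏ j ∈ spt G, J j ^ (V j) / (V j)!) +
      KL G J| ≤ 2 * ((g : ℝ) + 1) * Real.log N / N := by
  have hN0 : (0:ℝ) < N := by positivity
  have hNne : (N:ℝ) ≠ 0 := ne_of_gt hN0
  have hmem : ∀ j, j ∈ spt G ↔ 0 < V j := by
    intro j
    simp only [spt, Finset.mem_filter, Finset.mem_univ, true_and, hGV j]
    constructor
    · intro h
      by_contra hc
      push_neg at hc
      interval_cases (V j) <;> simp_all
    · intro h
      positivity
  have hJpos : ∀ j ∈ spt G, 0 < J j := by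
    intro j hj
    apply hsub
    simpa [spt] using hj
  have hVpos : ∀ j ∈ spt G, 1 ≤ V j := fun j hj => (hmem j).1 hj
  have hVle : ∀ j ∈ spt G, V j ≤ N := by
    intro j hj
    rw [← hV]
    exact Finset.single_le_sum (fun i _ => Nat.zero_le _) (Finset.mem_univ j)
  have hsumS : ∑ j ∈ spt G, V j = N := by
    rw [← hV]
    apply Finset.sum_subset (Finset.subset_univ _)
    intro j _ hj
    have := (hmem j).not.1 hj
    omega
  have hsumSR : ∑ j ∈ spt G, (V j : ℝ) = (N:ℝ) := by
    exact_mod_cast congrArg (Nat.cast : ℕ → ℝ) hsumS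
  have hprodne : ∀ j ∈ spt G, J j ^ V j / ((V j)! : ℝ) ≠ 0 := by
    intro j hj
    have h1 := hJpos j hj
    have h2 : (0:ℝ) < ((V j)! : ℝ) := by exact_mod_cast (V j).factorial_pos
    positivity
  have hlog : Real.log ((N ! : ℝ) * ∏ j ∈ spt G, J j ^ (V j) / (V j)!) =
      Real.log (N ! : ℝ) +
        ∑ j ∈ spt G, ((V j : ℝ) * Real.log (J j) - Real.log ((V j)! : ℝ)) := by
    rw [Real.log_mul (by positivity) (Finset.prod_ne_zero_iff.2 hprodne),
      Real.log_prod hprodne]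
    congr 1
    apply Finset.sum_congr rfl
    intro j hj
    have h1 := hJpos j hj
    have h2 : ((V j)! : ℝ) ≠ 0 := by
      exact_mod_cast (V j).factorial_ne_zero
    rw [Real.log_div (by positivity) h2, Real.log_pow]
  have hKL : (N:ℝ) * KL G J =
      ∑ j ∈ spt G, (V j : ℝ) * (Real.log (V j) - Real.log N - Real.log (J j)) := by
    unfold KL
    rw [Finset.mul_sum]
    apply Finset.sum_congr rfl
    intro j hj
    have hJj := hJpos j hj
    have hVj : (0:ℝ) < (V j : ℝ) := by exact_mod_cast hVpos j hj
    have hlogq : Real.log ((V j : ℝ) / N / J j)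
        = Real.log (V j) - Real.log N - Real.log (J j) := by
      rw [Real.log_div (by positivity) (ne_of_gt hJj),
        Real.log_div (ne_of_gt hVj) hNne]
    rw [hGV j, hlogq]
    field_simp
  -- key identity
  have key : Real.log ((N ! : ℝ) * ∏ j ∈ spt G, J j ^ (V j) / (V j)!) + (N:ℝ) * KL G J
      = Dst N - ∑ j ∈ spt G, Dst (V j) := by
    rw [hlog, hKL]
    simp only [Dst]
    have E1 : ∑ j ∈ spt G,
        (((V j : ℝ) * Real.log (J j) - Real.log ((V j)! : ℝ))
          + ((V j : ℝ) * (Real.log (V j) - Real.log N - Real.log (J j))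
          + (Real.log ((V j)! : ℝ) - ((V j : ℝ) * Real.log (V j) - (V j : ℝ)))))
        = (N:ℝ) * (1 - Real.log N) := by
      rw [Finset.sum_congr rfl
        (show ∀ j ∈ spt G, (((V j : ℝ) * Real.log (J j) - Real.log ((V j)! : ℝ))
          + ((V j : ℝ) * (Real.log (V j) - Real.log N - Real.log (J j))
          + (Real.log ((V j)! : ℝ) - ((V j : ℝ) * Real.log (V j) - (V j : ℝ)))))
          = (V j : ℝ) * (1 - Real.log N) from fun j _ => by ring)]
      rw [← Finset.sum_mul, hsumSR]
    rw [Finset.sum_add_distrib, Finset.sum_add_distrib] at E1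
    linarith [E1]
  -- rewrite the target
  have hre : (1 / (N : ℝ)) *
        Real.log ((N ! : ℝ) * ∏ j ∈ spt G, J j ^ (V j) / (V j)!) + KL G J
      = (1/(N:ℝ)) * (Dst N - ∑ j ∈ spt G, Dst (V j)) := by
    rw [← key]
    field_simp
  rw [hre, abs_mul, abs_of_pos (by positivity : (0:ℝ) < 1/(N:ℝ))]
  have hlogN0 : (0:ℝ) ≤ Real.log N := Real.log_nonneg (by exact_mod_cast hN.trans' one_le_two)
  have hbound : |Dst N - ∑ j ∈ spt G, Dst (V j)| ≤ 2 * ((g:ℝ)+1) * Real.log N := by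
    have hDN := Dst_le_two_log N N hN (by omega) le_rfl
    have hDN0 := Dst_nonneg N
    have hsum0 : 0 ≤ ∑ j ∈ spt G, Dst (V j) :=
      Finset.sum_nonneg (fun j _ => Dst_nonneg _)
    have hsumle : ∑ j ∈ spt G, Dst (V j) ≤ (g:ℝ) * (2 * Real.log N) := by
      calc ∑ j ∈ spt G, Dst (V j) ≤ ∑ j ∈ spt G, 2 * Real.log N :=
            Finset.sum_le_sum (fun j hj => Dst_le_two_log N (V j) hN (hVpos j hj) (hVle j hj))
        _ = (spt G).card * (2 * Real.log N) := by rw [Finset.sum_const, nsmul_eq_mul]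
        _ ≤ (g:ℝ) * (2 * Real.log N) := by
            apply mul_le_mul_of_nonneg_right _ (by positivity)
            have : (spt G).card ≤ g := by
              simpa using Finset.card_le_card (Finset.subset_univ (spt G))
            exact_mod_cast this
    rw [abs_le]
    constructor <;> nlinarith
  calc 1/(N:ℝ) * |Dst N - ∑ j ∈ spt G, Dst (V j)|
      ≤ 1/(N:ℝ) * (2 * ((g:ℝ)+1) * Real.log N) :=
        mul_le_mul_of_nonneg_left hbound (by positivity)
    _ = 2 * ((g:ℝ)+1) * Real.log N / N := by ring
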